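/- Let α0,α1,α2,α3,α4 be complex numbers with α0+α1+2α2+2α3+2α4=1, and let (x,y,z,w) be a solution of the Sasano system B4(α0,α1,α2,α3,α4) on an annulus {|t|>R} such that z has a pole of order exactly one at t=∞ and x, y, w are holomorphic at t=∞. Then α4 ≠ 0 and, as t→∞: x(t) → α0−α1 with t·(x(t)−(α0−α1)) → −2α4·(2α2+2α3+2α4)·(2α3+2α4); y(t) → 1/2 with t·(y(t)−1/2) → 2α4·(α3+α4); z(t)/t → 1/(2α4); and w(t) → 0 with t·w(t) → −2α4·(α3+α4). -/

import Mathlib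

open Filter Topology Polynomial

noncomputable section

/-- The four equations of the Sasano system of type `B₄⁽¹⁾` at the point `t`. -/
def B4Eqs (a0 a1 a2 a3 a4 : ℂ) (x y z w : ℂ → ℂ) (t : ℂ) : Prop :=
  (t * deriv x t =
      2 * x t ^ 2 * y t - x t ^ 2 + (1 - 2*a2 - 2*a3 - 2*a4) * x t
        + 2 * a3 * z t + 2 * z t ^ 2 * w t + t) ∧
  (t * deriv y t =
      -2 * x t * y t ^ 2 + 2 * x t * y t - (1 - 2*a2 - 2*a3 - 2*a4) * y t + a1) ∧
  (t * deriv z t =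
      2 * z t ^ 2 * w t - z t ^ 2 + (1 - 2*a4) * z t + 2 * y t * z t ^ 2 + t) ∧
  (t * deriv w t =
      -2 * z t * w t ^ 2 + 2 * z t * w t - (1 - 2*a4) * w t
        - 2 * a3 * y t - 4 * y t * z t * w t + a3)

/-- `(x,y,z,w)` is a holomorphic solution of the Sasano system `B₄⁽¹⁾` on the set `s`. -/
def SolvesB4On (a0 a1 a2 a3 a4 : ℂ) (x y z w : ℂ → ℂ) (s : Set ℂ) : Prop :=
  ∀ t ∈ s, DifferentiableAt ℂ x t ∧ DifferentiableAt ℂ y t ∧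
    DifferentiableAt ℂ z t ∧ DifferentiableAt ℂ w t ∧ B4Eqs a0 a1 a2 a3 a4 x y z w t

/-- The filter of neighbourhoods of `t = ∞` in `ℂ`. -/
def atInfty : Filter ℂ := Filter.comap (fun t : ℂ => ‖t‖) Filter.atTop

/-- `f` is holomorphic at `t = ∞`: `f(t)` has a finite limit as `t → ∞`. -/
def HoloAtInfty (f : ℂ → ℂ) : Prop := ∃ L : ℂ, Tendsto f atInfty (𝓝 L)

/-- `f` has a pole of order `n ≥ 1` at `t = ∞`: `t⁻ⁿ·f(t)` has a finite nonzero limit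
as `t → ∞`. -/
def PoleAtInftyOfOrder (f : ℂ → ℂ) (n : ℕ) : Prop :=
  ∃ L : ℂ, L ≠ 0 ∧ Tendsto (fun t => f t / t ^ n) atInfty (𝓝 L)

lemma tendsto_norm_atInfty : Tendsto (fun t : ℂ => ‖t‖) atInfty atTop := tendsto_comap

lemma eventually_gt_atInfty (B : ℝ) : ∀ᶠ t : ℂ in atInfty, B < ‖t‖ :=
  tendsto_norm_atInfty.eventually (eventually_gt_atTop B)

instance : atInfty.NeBot := by
  refine Filter.comap_neBot fun s hs => ?_
  rcases mem_atTop_sets.1 hs with ⟨b, hb⟩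
  exact ⟨((max b 0 : ℝ) : ℂ), hb _ (by
    rw [Complex.norm_real]
    exact le_abs.mpr (Or.inl (le_max_left _ _)))⟩

lemma eventually_atInfty_iff {p : ℂ → Prop} :
    (∀ᶠ t : ℂ in atInfty, p t) ↔ ∃ B : ℝ, ∀ t : ℂ, B < ‖t‖ → p t := by
  constructor
  · intro h
    rw [atInfty, eventually_comap, eventually_atTop] at h
    rcases h with ⟨B, hB⟩
    exact ⟨B, fun t ht => hB ‖t‖ ht.le t rfl⟩
  · rintro ⟨B, hB⟩
    rw [atInfty, eventually_comap, eventually_atTop]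
    exact ⟨B + 1, fun b hb t ht => hB t (by rw [ht]; linarith)⟩

lemma tendsto_inv_atInfty : Tendsto (fun t : ℂ => t⁻¹) atInfty (𝓝[≠] (0:ℂ)) := by
  rw [tendsto_nhdsWithin_iff]
  constructor
  · rw [tendsto_zero_iff_norm_tendsto_zero]
    have : Tendsto (fun t : ℂ => ‖t‖⁻¹) atInfty (𝓝 0) :=
      tendsto_norm_atInfty.inv_tendsto_atTop
    simpa [norm_inv] using this
  · filter_upwards [eventually_gt_atInfty 0] with t ht
    have : t ≠ 0 := by simpa using norm_pos_iff.1 ht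
    simp [this]

lemma tendsto_inv_atInfty_zero : Tendsto (fun t : ℂ => t⁻¹) atInfty (𝓝 (0:ℂ)) :=
  tendsto_inv_atInfty.mono_right nhdsWithin_le_nhds

lemma inv_tendsto_atInfty : Tendsto (fun s : ℂ => s⁻¹) (𝓝[≠] (0:ℂ)) atInfty := by
  rw [atInfty, tendsto_comap_iff]
  have h1 : Tendsto (fun s : ℂ => ‖s‖) (𝓝[≠] (0:ℂ)) (𝓝[>] 0) := by
    rw [tendsto_nhdsWithin_iff]
    constructor
    · exact (continuous_norm.tendsto 0).mono_left nhdsWithin_le_nhds |>.congr (by simp) |>.mono_right (by simp)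
    · filter_upwards [self_mem_nhdsWithin] with s hs
      exact norm_pos_iff.2 hs
  exact (tendsto_inv_nhdsGT_zero.comp h1).congr fun s => (norm_inv s).symm

lemma key (R : ℝ) (f : ℂ → ℂ) (hf : ∀ t : ℂ, R < ‖t‖ → DifferentiableAt ℂ f t)
    (L : ℂ) (hL : Tendsto f atInfty (𝓝 L)) :
    ∃ M : ℂ, Tendsto (fun t => t * (f t - L)) atInfty (𝓝 M) ∧
      Tendsto (fun t => t * deriv f t) atInfty (𝓝 0) ∧
      Tendsto (fun t => t ^ 2 * deriv f t) atInfty (𝓝 (-M)) := by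
  obtain ⟨B0, hB0⟩ := eventually_atInfty_iff.1
    (hL.norm.eventually (eventually_le_nhds (lt_add_one ‖L‖)))
  set B : ℝ := max (max R B0) 1 with hBdef
  have hB1 : (1:ℝ) ≤ B := le_max_right _ _
  have hBpos : (0:ℝ) < B := lt_of_lt_of_le one_pos hB1
  have hRB : R ≤ B := le_trans (le_max_left R B0) (le_max_left _ _)
  have hB0B : B0 ≤ B := le_trans (le_max_right R B0) (le_max_left _ _)
  set ρ : ℝ := B⁻¹ with hρdef
  have hρpos : (0:ℝ) < ρ := inv_pos.2 hBpos
  set g0 : ℂ → ℂ := fun s => f s⁻¹ with hg0def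
  have hmem : ∀ s : ℂ, s ∈ Metric.ball (0:ℂ) ρ \ {0} → B < ‖s⁻¹‖ := by
    rintro s ⟨hs1, hs2⟩
    have hs0 : s ≠ 0 := hs2
    have hsn : ‖s‖ < ρ := by simpa [Metric.mem_ball, dist_zero_right] using hs1
    have hspos : (0:ℝ) < ‖s‖ := norm_pos_iff.2 hs0
    rw [norm_inv]
    calc B = ρ⁻¹ := by rw [hρdef, inv_inv]
    _ < ‖s‖⁻¹ := by exact (inv_lt_inv₀ hρpos hspos).2 hsn
  have hdiff0 : DifferentiableOn ℂ g0 (Metric.ball (0:ℂ) ρ \ {0}) := by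
    intro s hs
    have hs0 : s ≠ 0 := hs.2
    have : DifferentiableAt ℂ g0 s :=
      (hf s⁻¹ (lt_of_le_of_lt hRB (hmem s hs))).comp s (differentiableAt_inv hs0)
    exact this.differentiableWithinAt
  have hbdd : BddAbove (norm ∘ g0 '' (Metric.ball (0:ℂ) ρ \ {0})) := by
    refine ⟨‖L‖ + 1, ?_⟩
    rintro v ⟨s, hs, rfl⟩
    exact hB0 _ (lt_of_le_of_lt hB0B (hmem s hs))
  have hball : Metric.ball (0:ℂ) ρ ∈ 𝓝 (0:ℂ) := Metric.ball_mem_nhds _ hρpos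
  have hupd := Complex.differentiableOn_update_limUnder_of_bddAbove hball hdiff0 hbdd
  have hg0lim : Tendsto g0 (𝓝[≠] (0:ℂ)) (𝓝 L) := hL.comp inv_tendsto_atInfty
  set g : ℂ → ℂ := Function.update g0 0 (limUnder (𝓝[≠] (0:ℂ)) g0) with hgdef
  have hgval : g 0 = L := by
    rw [hgdef, Function.update_self]
    exact hg0lim.limUnder_eq
  have hgd : DifferentiableOn ℂ g (Metric.ball (0:ℂ) ρ) := hupd
  have hana : AnalyticOnNhd ℂ g (Metric.ball (0:ℂ) ρ) := hgd.analyticOnNhd Metric.isOpen_ball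
  have hcont : ContinuousAt (deriv g) 0 :=
    ((hana.deriv) 0 (Metric.mem_ball_self hρpos)).continuousAt
  set M : ℂ := deriv g 0 with hMdef
  have hinv_mem : ∀ t : ℂ, B < ‖t‖ → t⁻¹ ∈ Metric.ball (0:ℂ) ρ := by
    intro t ht
    have ht0 : t ≠ 0 := norm_pos_iff.1 (lt_trans hBpos ht)
    rw [Metric.mem_ball, dist_zero_right, norm_inv]
    rw [hρdef]
    exact (inv_lt_inv₀ (norm_pos_iff.2 ht0) hBpos).2 ht
  have hgf : ∀ t : ℂ, B < ‖t‖ → g t⁻¹ = f t := by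
    intro t ht
    have ht0 : t ≠ 0 := norm_pos_iff.1 (lt_trans hBpos ht)
    rw [hgdef, Function.update_of_ne (inv_ne_zero ht0)]
    simp [hg0def]
  -- (a)
  have hslope : Tendsto (slope g 0) (𝓝[≠] (0:ℂ)) (𝓝 M) :=
    hasDerivAt_iff_tendsto_slope.1 ((hgd.differentiableAt hball).hasDerivAt)
  have ha : Tendsto (fun t : ℂ => t * (f t - L)) atInfty (𝓝 M) := by
    have h1 : Tendsto (fun t : ℂ => slope g 0 t⁻¹) atInfty (𝓝 M) :=
      hslope.comp tendsto_inv_atInfty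
    refine h1.congr' ?_
    filter_upwards [eventually_gt_atInfty B] with t ht
    have ht0 : t ≠ 0 := norm_pos_iff.1 (lt_trans hBpos ht)
    rw [slope_def_field, hgf t ht, hgval, sub_zero]
    field_simp
  -- deriv formula
  have hderiv : ∀ t : ℂ, B < ‖t‖ → deriv f t = deriv g t⁻¹ * (-(t ^ 2)⁻¹) := by
    intro t ht
    have ht0 : t ≠ 0 := norm_pos_iff.1 (lt_trans hBpos ht)
    have hga : DifferentiableAt ℂ g t⁻¹ :=
      hgd.differentiableAt (Metric.isOpen_ball.mem_nhds (hinv_mem t ht))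
    have h2 : HasDerivAt (fun s : ℂ => g s⁻¹) (deriv g t⁻¹ * (-(t ^ 2)⁻¹)) t :=
      (hga.hasDerivAt).comp t (hasDerivAt_inv ht0)
    have hop : IsOpen {s : ℂ | B < ‖s‖} := isOpen_lt continuous_const continuous_norm
    have heq : f =ᶠ[𝓝 t] fun s => g s⁻¹ := by
      filter_upwards [hop.mem_nhds ht] with s hs
      exact (hgf s hs).symm
    exact (h2.congr_of_eventuallyEq heq).deriv
  have hdg : Tendsto (fun t : ℂ => deriv g t⁻¹) atInfty (𝓝 M) :=
    hcont.tendsto.comp tendsto_inv_atInfty_zero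
  have hb : Tendsto (fun t : ℂ => t * deriv f t) atInfty (𝓝 0) := by
    have h1 : Tendsto (fun t : ℂ => -(t⁻¹ * deriv g t⁻¹)) atInfty (𝓝 (-(0 * M))) :=
      (tendsto_inv_atInfty_zero.mul hdg).neg
    rw [zero_mul, neg_zero] at h1
    refine h1.congr' ?_
    filter_upwards [eventually_gt_atInfty B] with t ht
    have ht0 : t ≠ 0 := norm_pos_iff.1 (lt_trans hBpos ht)
    rw [hderiv t ht]
    field_simp
  have hc : Tendsto (fun t : ℂ => t ^ 2 * deriv f t) atInfty (𝓝 (-M)) := by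
    have h1 : Tendsto (fun t : ℂ => -(deriv g t⁻¹)) atInfty (𝓝 (-M)) := hdg.neg
    refine h1.congr' ?_
    filter_upwards [eventually_gt_atInfty B] with t ht
    have ht0 : t ≠ 0 := norm_pos_iff.1 (lt_trans hBpos ht)
    rw [hderiv t ht]
    have h2 : (t:ℂ)^2 ≠ 0 := pow_ne_zero 2 ht0
    field_simp
  exact ⟨M, ha, hb, hc⟩

set_option maxHeartbeats 1000000 in
/-- Asymptotics at `t = ∞` of a solution of the Sasano system `B₄⁽¹⁾` for which `z` has a
pole of order exactly one at `t = ∞` and `x, y, w` are holomorphic at `t = ∞`. -/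
theorem B4_pole_order_one_asymptotics (a0 a1 a2 a3 a4 : ℂ)
    (hsum : a0 + a1 + 2*a2 + 2*a3 + 2*a4 = 1) (R : ℝ) (x y z w : ℂ → ℂ)
    (hsol : SolvesB4On a0 a1 a2 a3 a4 x y z w {t : ℂ | R < ‖t‖})
    (hz : PoleAtInftyOfOrder z 1)
    (hx : HoloAtInfty x) (hy : HoloAtInfty y) (hw : HoloAtInfty w) :
    a4 ≠ 0 ∧
    Tendsto x atInfty (𝓝 (a0 - a1)) ∧
    Tendsto (fun t => t * (x t - (a0 - a1))) atInfty
      (𝓝 (-2*a4 * (2*a2 + 2*a3 + 2*a4) * (2*a3 + 2*a4))) ∧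
    Tendsto y atInfty (𝓝 (1/2)) ∧
    Tendsto (fun t => t * (y t - 1/2)) atInfty (𝓝 (2*a4*(a3 + a4))) ∧
    Tendsto (fun t => z t / t) atInfty (𝓝 (1/(2*a4))) ∧
    Tendsto w atInfty (𝓝 0) ∧
    Tendsto (fun t => t * w t) atInfty (𝓝 (-2*a4*(a3 + a4))) := by
  obtain ⟨C, hC0, hCz⟩ := hz
  obtain ⟨X, hX⟩ := hx
  obtain ⟨Y, hY⟩ := hy
  obtain ⟨W, hW⟩ := hw
  have hζ : Tendsto (fun t => z t / t) atInfty (𝓝 C) := by simpa using hCz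
  have hxd : ∀ t : ℂ, R < ‖t‖ → DifferentiableAt ℂ x t := fun t ht => (hsol t ht).1
  have hyd : ∀ t : ℂ, R < ‖t‖ → DifferentiableAt ℂ y t := fun t ht => (hsol t ht).2.1
  have hzd : ∀ t : ℂ, R < ‖t‖ → DifferentiableAt ℂ z t := fun t ht => (hsol t ht).2.2.1
  have hwd : ∀ t : ℂ, R < ‖t‖ → DifferentiableAt ℂ w t := fun t ht => (hsol t ht).2.2.2.1
  have hζd : ∀ t : ℂ, max R 0 < ‖t‖ → DifferentiableAt ℂ (fun s => z s / s) t := by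
    intro t ht
    have ht0 : t ≠ 0 := norm_pos_iff.1 (lt_of_le_of_lt (le_max_right R 0) ht)
    exact (hzd t (lt_of_le_of_lt (le_max_left R 0) ht)).div differentiableAt_fun_id ht0
  obtain ⟨x₁, hx₁, hxd0, hxd1⟩ := key R x hxd X hX
  obtain ⟨y₁, hy₁, hyd0, hyd1⟩ := key R y hyd Y hY
  obtain ⟨w₁, hw₁, hwd0, hwd1⟩ := key R w hwd W hW
  obtain ⟨z₀, hz₀, hζd0, hζd1⟩ := key (max R 0) (fun s => z s / s) hζd C hζ
  have hne : ∀ᶠ t : ℂ in atInfty, t ≠ 0 := by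
    filter_upwards [eventually_gt_atInfty 0] with t ht
    exact norm_pos_iff.1 ht
  have hEq : ∀ᶠ t : ℂ in atInfty, B4Eqs a0 a1 a2 a3 a4 x y z w t := by
    filter_upwards [eventually_gt_atInfty (max R 0)] with t ht
    exact (hsol t (lt_of_le_of_lt (le_max_left R 0) ht)).2.2.2.2
  -- limit of deriv z
  have hzder_eq : ∀ᶠ t : ℂ in atInfty, deriv z t = z t / t + t * deriv (fun s => z s / s) t := by
    filter_upwards [eventually_gt_atInfty (max R 0)] with t ht
    have ht0 : t ≠ 0 := norm_pos_iff.1 (lt_of_le_of_lt (le_max_right R 0) ht)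
    have h1 : HasDerivAt (fun s => z s / s) (deriv (fun s => z s / s) t) t := (hζd t ht).hasDerivAt
    have h2 : HasDerivAt (fun s : ℂ => s * (z s / s))
        (1 * (z t / t) + t * deriv (fun s => z s / s) t) t := (hasDerivAt_id t).mul h1
    have heqz : z =ᶠ[𝓝 t] fun s : ℂ => s * (z s / s) := by
      filter_upwards [(isOpen_compl_singleton (x := (0:ℂ))).mem_nhds (by simpa using ht0)] with s hs
      have hs0 : s ≠ 0 := hs
      field_simp
    rw [(h2.congr_of_eventuallyEq heqz).deriv]
    ring
  have hzderC : Tendsto (fun t => deriv z t) atInfty (𝓝 C) := by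
    have h := hζ.add hζd0
    rw [add_zero] at h
    exact h.congr' (hzder_eq.mono fun t ht => ht.symm)
  have hderiv_x0 : Tendsto (fun t => deriv x t) atInfty (𝓝 0) := by
    have h := hxd0.mul tendsto_inv_atInfty_zero
    rw [zero_mul] at h
    refine h.congr' ?_
    filter_upwards [hne] with t ht
    field_simp
  have hderiv_w0 : Tendsto (fun t => deriv w t) atInfty (𝓝 0) := by
    have h := hwd0.mul tendsto_inv_atInfty_zero
    rw [zero_mul] at h
    refine h.congr' ?_
    filter_upwards [hne] with t ht
    field_simp
  -- Equation 2 at order 1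
  have Ei : -2*X*Y^2 + 2*X*Y - (1-2*a2-2*a3-2*a4)*Y + a1 = 0 := by
    refine tendsto_nhds_unique ?_ hyd0
    have T : Tendsto (fun t => -2*x t*y t^2 + 2*x t*y t - (1-2*a2-2*a3-2*a4)*y t + a1) atInfty
        (𝓝 (-2*X*Y^2 + 2*X*Y - (1-2*a2-2*a3-2*a4)*Y + a1)) :=
      ((((tendsto_const_nhds.mul hX).mul (hY.pow 2)).add
        ((tendsto_const_nhds.mul hX).mul hY)).sub (tendsto_const_nhds.mul hY)).add
        tendsto_const_nhds
    exact T.congr' (hEq.mono fun t ht => ht.2.1.symm)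
  -- Equation 3 divided by t^2
  have E2 : 2*C^2*W + (2*Y-1)*C^2 + (1-2*a4)*C*0 + 0 = C * 0 := by
    refine tendsto_nhds_unique ?_ (hzderC.mul tendsto_inv_atInfty_zero)
    have T : Tendsto (fun t => 2*(z t/t)^2*w t + (2*y t-1)*(z t/t)^2
          + (1-2*a4)*(z t/t)*t⁻¹ + t⁻¹) atInfty
        (𝓝 (2*C^2*W + (2*Y-1)*C^2 + (1-2*a4)*C*0 + 0)) :=
      ((((tendsto_const_nhds.mul (hζ.pow 2)).mul hW).add
        (((tendsto_const_nhds.mul hY).sub tendsto_const_nhds).mul (hζ.pow 2))).add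
        ((tendsto_const_nhds.mul hζ).mul tendsto_inv_atInfty_zero)).add tendsto_inv_atInfty_zero
    refine T.congr' ?_
    filter_upwards [hEq, hne] with t ht ht0
    have h3 := ht.2.2.1
    have hz' : deriv z t = (2 * z t ^ 2 * w t - z t ^ 2 + (1 - 2*a4) * z t
        + 2 * y t * z t ^ 2 + t) * t⁻¹ := by
      rw [← h3]
      field_simp
    rw [hz']
    field_simp
    ring
  -- Equation 4 divided by t
  have E4a : C*W*(-2*W+2-4*Y) + (-(1-2*a4)*W - 2*a3*Y + a3)*0 = 0 := by
    refine tendsto_nhds_unique ?_ hderiv_w0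
    have T : Tendsto (fun t => (z t/t)*w t*(-2*w t+2-4*y t)
          + (-(1-2*a4)*w t - 2*a3*y t + a3)*t⁻¹) atInfty
        (𝓝 (C*W*(-2*W+2-4*Y) + (-(1-2*a4)*W - 2*a3*Y + a3)*0)) :=
      (((hζ.mul hW).mul (((tendsto_const_nhds.mul hW).add tendsto_const_nhds).sub
        (tendsto_const_nhds.mul hY))).add
        ((((tendsto_const_nhds.mul hW).sub (tendsto_const_nhds.mul hY)).add
          tendsto_const_nhds).mul tendsto_inv_atInfty_zero))
    refine T.congr' ?_
    filter_upwards [hEq, hne] with t ht ht0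
    have h4 := ht.2.2.2
    have hw' : deriv w t = (-2 * z t * w t ^ 2 + 2 * z t * w t - (1 - 2*a4) * w t
        - 2 * a3 * y t - 4 * y t * z t * w t + a3) * t⁻¹ := by
      rw [← h4]
      field_simp
    rw [hw']
    field_simp
    ring
  -- solve for W and Y
  have e2' : 2*W + 2*Y - 1 = 0 := by
    have h : C^2*(2*W + 2*Y - 1) = 0 := by linear_combination E2
    exact (mul_eq_zero.1 h).resolve_left (pow_ne_zero 2 hC0)
  have hW0 : W = 0 := by
    have h2 : (2*C) * W^2 = 0 := by linear_combination E4a + 2*C*W*e2'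
    have h3 : W^2 = 0 := (mul_eq_zero.1 h2).resolve_left (mul_ne_zero two_ne_zero hC0)
    exact pow_eq_zero_iff (two_ne_zero) |>.1 h3
  have hY12 : Y = 1/2 := by linear_combination e2'/2 - hW0
  rw [hY12] at Ei
  have hXval : X = a0 - a1 := by linear_combination 2*Ei - hsum
  rw [hY12] at hY hy₁
  rw [hW0] at hW hw₁
  simp only [sub_zero] at hw₁
  -- Equation 1 divided by t
  have E1' : (2*X^2*(1/2) - X^2 + (1-2*a2-2*a3-2*a4)*X)*0 + 2*a3*C + 2*C^2*w₁ + 1 = 0 := by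
    refine tendsto_nhds_unique ?_ hderiv_x0
    have T : Tendsto (fun t => (2*x t^2*y t - x t^2 + (1-2*a2-2*a3-2*a4)*x t)*t⁻¹
          + 2*a3*(z t/t) + 2*(z t/t)^2*(t*w t) + 1) atInfty
        (𝓝 ((2*X^2*(1/2) - X^2 + (1-2*a2-2*a3-2*a4)*X)*0 + 2*a3*C + 2*C^2*w₁ + 1)) :=
      (((((((tendsto_const_nhds.mul (hX.pow 2)).mul hY).sub (hX.pow 2)).add
        (tendsto_const_nhds.mul hX)).mul tendsto_inv_atInfty_zero).add
        (tendsto_const_nhds.mul hζ)).add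
        ((tendsto_const_nhds.mul (hζ.pow 2)).mul hw₁)).add tendsto_const_nhds
    refine T.congr' ?_
    filter_upwards [hEq, hne] with t ht ht0
    have h1 := ht.1
    have hx' : deriv x t = (2 * x t ^ 2 * y t - x t ^ 2 + (1 - 2*a2 - 2*a3 - 2*a4) * x t
        + 2 * a3 * z t + 2 * z t ^ 2 * w t + t) * t⁻¹ := by
      rw [← h1]
      field_simp
    rw [hx']
    field_simp
  -- Equation 3 divided by t
  have E3' : 2*C^2*w₁ + 2*y₁*C^2 + (1-2*a4)*C + 1 = C := by
    refine tendsto_nhds_unique ?_ hzderC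
    have T : Tendsto (fun t => 2*(z t/t)^2*(t*w t) + 2*(t*(y t-1/2))*(z t/t)^2
          + (1-2*a4)*(z t/t) + 1) atInfty
        (𝓝 (2*C^2*w₁ + 2*y₁*C^2 + (1-2*a4)*C + 1)) :=
      ((((tendsto_const_nhds.mul (hζ.pow 2)).mul hw₁).add
        ((tendsto_const_nhds.mul hy₁).mul (hζ.pow 2))).add
        (tendsto_const_nhds.mul hζ)).add tendsto_const_nhds
    refine T.congr' ?_
    filter_upwards [hEq, hne] with t ht ht0
    have h3 := ht.2.2.1
    have hz' : deriv z t = (2 * z t ^ 2 * w t - z t ^ 2 + (1 - 2*a4) * z t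
        + 2 * y t * z t ^ 2 + t) * t⁻¹ := by
      rw [← h3]
      field_simp
    rw [hz']
    field_simp
    ring
  -- Equation 4 multiplied by t
  have E4' : C*w₁*(-2*w₁ - 4*y₁) + (-(1-2*a4))*w₁ - 2*a3*y₁ = -w₁ := by
    refine tendsto_nhds_unique ?_ hwd1
    have T : Tendsto (fun t => (z t/t)*(t*w t)*(-2*(t*w t) - 4*(t*(y t-1/2)))
          + (-(1-2*a4))*(t*w t) - 2*a3*(t*(y t-1/2))) atInfty
        (𝓝 (C*w₁*(-2*w₁ - 4*y₁) + (-(1-2*a4))*w₁ - 2*a3*y₁)) :=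
      (((hζ.mul hw₁).mul ((tendsto_const_nhds.mul hw₁).sub
        (tendsto_const_nhds.mul hy₁))).add
        (tendsto_const_nhds.mul hw₁)).sub (tendsto_const_nhds.mul hy₁)
    refine T.congr' ?_
    filter_upwards [hEq, hne] with t ht ht0
    rw [show (t:ℂ)^2*deriv w t = t*(t*deriv w t) by ring, ht.2.2.2]
    field_simp
    ring
  -- Equation 2 multiplied by t
  have E2' : -2*(x₁*(1/2)^2 + X*(1/2+1/2)*y₁) + 2*(x₁*(1/2) + X*y₁)
      - (1-2*a2-2*a3-2*a4)*y₁ = -y₁ := by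
    refine tendsto_nhds_unique ?_ hyd1
    have T : Tendsto (fun t => -2*((t*(x t-X))*y t^2 + X*(y t+1/2)*(t*(y t-1/2)))
          + 2*((t*(x t-X))*y t + X*(t*(y t-1/2)))
          - (1-2*a2-2*a3-2*a4)*(t*(y t-1/2))) atInfty
        (𝓝 (-2*(x₁*(1/2)^2 + X*(1/2+1/2)*y₁) + 2*(x₁*(1/2) + X*y₁)
          - (1-2*a2-2*a3-2*a4)*y₁)) :=
      ((tendsto_const_nhds.mul ((hx₁.mul (hY.pow 2)).add
        ((tendsto_const_nhds.mul (hY.add tendsto_const_nhds)).mul hy₁))).add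
        (tendsto_const_nhds.mul ((hx₁.mul hY).add (tendsto_const_nhds.mul hy₁)))).sub
        (tendsto_const_nhds.mul hy₁)
    refine T.congr' ?_
    filter_upwards [hEq, hne] with t ht ht0
    rw [show (t:ℂ)^2*deriv y t = t*(t*deriv y t) by ring, ht.2.1]
    linear_combination (-t/2)*hXval - t/2*hsum
  -- Solve the algebraic system
  have h5' : C*(C*y₁ - a3 - a4) = 0 := by linear_combination (E3' - E1')/2
  have E5 : C*y₁ - a3 - a4 = 0 := (mul_eq_zero.1 h5').resolve_left hC0
  have hu : (C*w₁ + a3) * (C*w₁ + a3 + a4) = 0 := by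
    linear_combination (-C/2)*E4' - (2*C*w₁ + a3)*E5
  have h6 : C*w₁ + a3 ≠ 0 := by
    intro h
    exact one_ne_zero (α := ℂ) (by linear_combination E1' - 2*C*h)
  have hu7 : C*w₁ + a3 + a4 = 0 := (mul_eq_zero.1 hu).resolve_left h6
  have h8 : 2*C*a4 = 1 := by linear_combination 2*C*hu7 - E1'
  have ha4 : a4 ≠ 0 := by
    intro h
    exact one_ne_zero (α := ℂ) (by linear_combination 2*C*h - h8)
  have hCval : C = 1/(2*a4) := by
    rw [eq_div_iff (mul_ne_zero two_ne_zero ha4)]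
    linear_combination h8
  have hy₁val : y₁ = 2*a4*(a3 + a4) := by linear_combination 2*a4*E5 - y₁*h8
  have hw₁val : w₁ = -2*a4*(a3 + a4) := by linear_combination 2*a4*hu7 - w₁*h8
  have hx₁val : x₁ = -2*a4 * (2*a2 + 2*a3 + 2*a4) * (2*a3 + 2*a4) := by
    linear_combination 2*E2' - 2*(2*a2+2*a3+2*a4)*hy₁val
  -- assemble
  rw [hXval] at hX
  rw [hXval, hx₁val] at hx₁
  rw [hy₁val] at hy₁
  rw [hCval] at hζ
  rw [hw₁val] at hw₁
  exact ⟨ha4, hX, hx₁, hY, hy₁, hζ, hW, hw₁⟩
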